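/- Let A be a copositive symmetric tensor of order 3 and dimension 3 with a_{111} = a_{222} = a_{333} = 0. Then a_{112}, a_{113}, a_{221}, a_{223}, a_{331}, a_{332} are all nonnegative and 2 a_{123} + a_{112} + a_{113} + a_{221} + a_{223} + a_{331} + a_{332} ≥ 0. -/

import Mathlib

open Finset

/-- `A x^m` for an `m`-order `n`-dimensional tensor `A`. -/
noncomputable def tpow {m n : ℕ} (A : (Fin m → Fin n) → ℝ) (x : Fin n → ℝ) : ℝ :=
  ∑ f : Fin m → Fin n, A f * ∏ k, x (f k)

/-- `A` is symmetric: entries invariant under permutations of indices. -/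
def SymT {m n : ℕ} (A : (Fin m → Fin n) → ℝ) : Prop :=
  ∀ (σ : Equiv.Perm (Fin m)) (f : Fin m → Fin n), A (f ∘ σ) = A f

/-- `A` is copositive. -/
def CoposT {m n : ℕ} (A : (Fin m → Fin n) → ℝ) : Prop :=
  ∀ x : Fin n → ℝ, (∀ i, 0 ≤ x i) → 0 ≤ tpow A x

/-- `A` is strictly copositive. -/
def StrictCoposT {m n : ℕ} (A : (Fin m → Fin n) → ℝ) : Prop :=
  ∀ x : Fin n → ℝ, (∀ i, 0 ≤ x i) → x ≠ 0 → 0 < tpow A x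

def e3aux : Fin 3 × Fin 3 × Fin 3 ≃ (Fin 3 → Fin 3) where
  toFun p := ![p.1, p.2.1, p.2.2]
  invFun f := (f 0, f 1, f 2)
  left_inv := by intro p; simp
  right_inv := by intro f; funext i; fin_cases i <;> simp

lemma tpow_eq3 (A : (Fin 3 → Fin 3) → ℝ) (x : Fin 3 → ℝ) :
    tpow A x = ∑ i, ∑ j, ∑ k, A ![i, j, k] * (x i * x j * x k) := by
  rw [tpow, ← Equiv.sum_comp e3aux]
  simp [e3aux, Fintype.sum_prod_type, Fin.prod_univ_three, mul_assoc]

lemma symm_swap01 (A : (Fin 3 → Fin 3) → ℝ) (hA : SymT A) (a b c : Fin 3) :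
    A ![b, a, c] = A ![a, b, c] := by
  have h := hA (Equiv.swap 0 1) ![a, b, c]
  have he : (![a, b, c] ∘ Equiv.swap (0 : Fin 3) 1) = ![b, a, c] := by
    funext i; fin_cases i <;> simp [Equiv.swap_apply_def]
  rwa [he] at h

lemma symm_swap12 (A : (Fin 3 → Fin 3) → ℝ) (hA : SymT A) (a b c : Fin 3) :
    A ![a, c, b] = A ![a, b, c] := by
  have h := hA (Equiv.swap 1 2) ![a, b, c]
  have he : (![a, b, c] ∘ Equiv.swap (1 : Fin 3) 2) = ![a, c, b] := by
    funext i; fin_cases i <;> simp [Equiv.swap_apply_def]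
  rwa [he] at h

lemma coeff_nonneg {a b : ℝ} (h : ∀ t : ℝ, 0 ≤ t → 0 ≤ a * t ^ 2 + b * t) :
    0 ≤ a := by
  by_contra hn
  push_neg at hn
  set t := (|b| + 1) / (-a) with ht
  have hb : (0 : ℝ) < |b| + 1 := by positivity
  have hna : 0 < -a := by linarith
  have htpos : 0 < t := div_pos hb hna
  have hat : a * t = -(|b| + 1) := by
    rw [ht, mul_div_assoc', div_eq_iff hna.ne']; ring
  have h2 := h t htpos.le
  have h3 : a * t ^ 2 + b * t = (a * t + b) * t := by ring
  rw [h3, hat] at h2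
  nlinarith [le_abs_self b, htpos]

theorem stmt16 (A : (Fin 3 → Fin 3) → ℝ) (hA : SymT A) (hc : CoposT A)
    (h1 : A ![0, 0, 0] = 0) (h2 : A ![1, 1, 1] = 0) (h3 : A ![2, 2, 2] = 0) :
    0 ≤ A ![0, 0, 1] ∧ 0 ≤ A ![0, 0, 2] ∧ 0 ≤ A ![1, 1, 0] ∧
    0 ≤ A ![1, 1, 2] ∧ 0 ≤ A ![2, 2, 0] ∧ 0 ≤ A ![2, 2, 1] ∧
    0 ≤ 2 * A ![0, 1, 2] + A ![0, 0, 1] + A ![0, 0, 2] + A ![1, 1, 0] +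
        A ![1, 1, 2] + A ![2, 2, 0] + A ![2, 2, 1] := by
  have s1 := symm_swap01 A hA
  have s2 := symm_swap12 A hA
  -- canonicalizing equalities
  have e010 : A ![0, 1, 0] = A ![0, 0, 1] := s2 0 0 1
  have e100 : A ![1, 0, 0] = A ![0, 0, 1] := (s1 0 1 0).trans e010
  have e020 : A ![0, 2, 0] = A ![0, 0, 2] := s2 0 0 2
  have e200 : A ![2, 0, 0] = A ![0, 0, 2] := (s1 0 2 0).trans e020
  have e101 : A ![1, 0, 1] = A ![1, 1, 0] := s2 1 1 0
  have e011 : A ![0, 1, 1] = A ![1, 1, 0] := (s1 1 0 1).trans e101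
  have e202 : A ![2, 0, 2] = A ![2, 2, 0] := s2 2 2 0
  have e022 : A ![0, 2, 2] = A ![2, 2, 0] := (s1 2 0 2).trans e202
  have e121 : A ![1, 2, 1] = A ![1, 1, 2] := s2 1 1 2
  have e211 : A ![2, 1, 1] = A ![1, 1, 2] := (s1 1 2 1).trans e121
  have e212 : A ![2, 1, 2] = A ![2, 2, 1] := s2 2 2 1
  have e122 : A ![1, 2, 2] = A ![2, 2, 1] := (s1 2 1 2).trans e212
  have e021 : A ![0, 2, 1] = A ![0, 1, 2] := s2 0 1 2
  have e102 : A ![1, 0, 2] = A ![0, 1, 2] := s1 0 1 2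
  have e120 : A ![1, 2, 0] = A ![0, 1, 2] := (s2 1 0 2).trans e102
  have e201 : A ![2, 0, 1] = A ![0, 1, 2] := (s1 0 2 1).trans e021
  have e210 : A ![2, 1, 0] = A ![0, 1, 2] := (s2 2 0 1).trans e201
  -- pair (i, j): x with x i = t, x j = 1, rest 0 gives 0 ≤ 3 A_iij t² + 3 A_ijj t
  have key : ∀ x : Fin 3 → ℝ, (∀ i, 0 ≤ x i) →
      0 ≤ ∑ i, ∑ j, ∑ k, A ![i, j, k] * (x i * x j * x k) := by
    intro x hx
    rw [← tpow_eq3]; exact hc x hx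
  have g1 : 0 ≤ A ![0, 0, 1] := by
    apply coeff_nonneg (b := A ![1, 1, 0])
    intro t ht
    have h := key ![t, 1, 0] (by intro i; fin_cases i <;> simp [ht])
    simp only [Fin.sum_univ_three, Matrix.cons_val_zero, Matrix.cons_val_one, Matrix.head_cons,
      Matrix.cons_val_two, Matrix.tail_cons] at h
    ring_nf at h
    rw [e010, e100, e101, e011, h1, h2] at h
    ring_nf at h ⊢
    linarith [h]
  have g2 : 0 ≤ A ![0, 0, 2] := by
    apply coeff_nonneg (b := A ![2, 2, 0])
    intro t ht
    have h := key ![t, 0, 1] (by intro i; fin_cases i <;> simp [ht])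
    simp only [Fin.sum_univ_three, Matrix.cons_val_zero, Matrix.cons_val_one, Matrix.head_cons,
      Matrix.cons_val_two, Matrix.tail_cons] at h
    ring_nf at h
    rw [e020, e200, e202, e022, h1, h3] at h
    ring_nf at h ⊢
    linarith [h]
  have g3 : 0 ≤ A ![1, 1, 0] := by
    apply coeff_nonneg (b := A ![0, 0, 1])
    intro t ht
    have h := key ![1, t, 0] (by intro i; fin_cases i <;> simp [ht])
    simp only [Fin.sum_univ_three, Matrix.cons_val_zero, Matrix.cons_val_one, Matrix.head_cons,
      Matrix.cons_val_two, Matrix.tail_cons] at h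
    ring_nf at h
    rw [e010, e100, e101, e011, h1, h2] at h
    ring_nf at h ⊢
    linarith [h]
  have g4 : 0 ≤ A ![1, 1, 2] := by
    apply coeff_nonneg (b := A ![2, 2, 1])
    intro t ht
    have h := key ![0, t, 1] (by intro i; fin_cases i <;> simp [ht])
    simp only [Fin.sum_univ_three, Matrix.cons_val_zero, Matrix.cons_val_one, Matrix.head_cons,
      Matrix.cons_val_two, Matrix.tail_cons] at h
    ring_nf at h
    rw [e121, e211, e212, e122, h2, h3] at h
    ring_nf at h ⊢
    linarith [h]
  have g5 : 0 ≤ A ![2, 2, 0] := by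
    apply coeff_nonneg (b := A ![0, 0, 2])
    intro t ht
    have h := key ![1, 0, t] (by intro i; fin_cases i <;> simp [ht])
    simp only [Fin.sum_univ_three, Matrix.cons_val_zero, Matrix.cons_val_one, Matrix.head_cons,
      Matrix.cons_val_two, Matrix.tail_cons] at h
    ring_nf at h
    rw [e020, e200, e202, e022, h1, h3] at h
    ring_nf at h ⊢
    linarith [h]
  have g6 : 0 ≤ A ![2, 2, 1] := by
    apply coeff_nonneg (b := A ![1, 1, 2])
    intro t ht
    have h := key ![0, 1, t] (by intro i; fin_cases i <;> simp [ht])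
    simp only [Fin.sum_univ_three, Matrix.cons_val_zero, Matrix.cons_val_one, Matrix.head_cons,
      Matrix.cons_val_two, Matrix.tail_cons] at h
    ring_nf at h
    rw [e121, e211, e212, e122, h2, h3] at h
    ring_nf at h ⊢
    linarith [h]
  have g7 : 0 ≤ 2 * A ![0, 1, 2] + A ![0, 0, 1] + A ![0, 0, 2] + A ![1, 1, 0] +
      A ![1, 1, 2] + A ![2, 2, 0] + A ![2, 2, 1] := by
    have h := key ![1, 1, 1] (by intro i; fin_cases i <;> norm_num)
    simp only [Fin.sum_univ_three, Matrix.cons_val_zero, Matrix.cons_val_one, Matrix.head_cons,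
      Matrix.cons_val_two, Matrix.tail_cons] at h
    ring_nf at h
    rw [e010, e100, e101, e011, e020, e200, e202, e022, e121, e211, e212, e122,
      e021, e102, e120, e201, e210, h1, h2, h3] at h
    linarith [h]
  exact ⟨g1, g2, g3, g4, g5, g6, g7⟩
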